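/- Small gain theorem: Suppose s¹,...,sᵐ are sequences of nonnegative real numbers (e.g., norms of vector sequences) such that for every K and each i, sup_{0≤k≤K} λ^{-k} s^{(i mod m)+1}(k) ≤ γᵢ · sup_{0≤k≤K} λ^{-k} sⁱ(k) + ωᵢ, where γᵢ ≥ 0 and ωᵢ are constants independent of K, and γ₁γ₂⋯γₘ < 1. Then sup_{k≥0} λ^{-k} s¹(k) ≤ (ω₁γ₂γ₃⋯γₘ + ω₂γ₃⋯γₘ + ⋯ + ω_{m-1}γₘ + ωₘ)/(1 - γ₁γ₂⋯γₘ). -/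

import Mathlib

open Fin.NatCast in
private lemma sg_aux (m : ℕ) [NeZero m] (γ : Fin m → ℝ) (i : Fin m) :
    ∏ j ∈ Finset.Ico (i.val+1) m, γ (↑j) = ∏ j ∈ Finset.univ.filter (fun j => i < j), γ j := by
  refine Finset.prod_nbij' (fun j => (↑j : Fin m)) (fun j => (j : ℕ)) ?_ ?_ ?_ ?_ ?_
  · intro a ha
    simp only [Finset.mem_Ico] at ha
    simp only [Finset.mem_filter, Finset.mem_univ, true_and, Fin.lt_def,
      Fin.val_cast_of_lt ha.2]
    omega
  · intro a ha
    simp only [Finset.mem_filter, Finset.mem_univ, true_and, Fin.lt_def] at ha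
    simp only [Finset.mem_Ico]
    omega
  · intro a ha
    simp only [Finset.mem_Ico] at ha
    simp [Fin.val_cast_of_lt ha.2]
  · intro a ha
    simp
  · intro a ha
    rfl

open Fin.NatCast in
theorem small_gain (m : ℕ) [NeZero m] (lam : ℝ) (hlam0 : 0 < lam) (hlam1 : lam < 1)
    (s : Fin m → ℕ → ℝ) (hs : ∀ i k, 0 ≤ s i k)
    (γ ω : Fin m → ℝ) (hγ : ∀ i, 0 ≤ γ i)
    (harrow : ∀ (K : ℕ) (i : Fin m),
      (⨆ k : Fin (K + 1), lam ^ (-((k : ℕ) : ℤ)) * s (i + 1) k)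
        ≤ γ i * (⨆ k : Fin (K + 1), lam ^ (-((k : ℕ) : ℤ)) * s i k) + ω i)
    (hprod : ∏ i, γ i < 1) :
    ∀ k : ℕ, lam ^ (-(k : ℤ)) * s 0 k ≤
      (∑ i : Fin m, ω i * ∏ j ∈ Finset.univ.filter (fun j => i < j), γ j)
        / (1 - ∏ i, γ i) := by
  set F : Fin m → ℕ → ℝ := fun i K => ⨆ k : Fin (K+1), lam ^ (-((k:ℕ):ℤ)) * s i k with hF
  have hle : ∀ (i : Fin m) (K : ℕ) (k : Fin (K+1)),
      lam ^ (-((k:ℕ):ℤ)) * s i k ≤ F i K := fun i K k =>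
    le_ciSup (f := fun k : Fin (K+1) => lam ^ (-((k:ℕ):ℤ)) * s i k)
      (Set.Finite.bddAbove (Set.finite_range _)) k
  have hF0 : ∀ (i : Fin m) (K : ℕ), 0 ≤ F i K := by
    intro i K
    refine le_trans ?_ (hle i K 0)
    exact mul_nonneg (le_of_lt (zpow_pos hlam0 _)) (hs i _)
  have key : ∀ (K n : ℕ), n ≤ m → F (↑n) K ≤ (∏ j ∈ Finset.range n, γ ↑j) * F 0 K
      + ∑ i ∈ Finset.range n, ω ↑i * ∏ j ∈ Finset.Ico (i+1) n, γ ↑j := by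
    intro K n
    induction n with
    | zero => intro _; simp
    | succ n ih =>
      intro hn
      have hn' : n ≤ m := Nat.le_of_succ_le hn
      have hcast : ((n+1 : ℕ) : Fin m) = (n : Fin m) + 1 := by push_cast; ring
      have h1 : F (↑(n+1)) K ≤ γ ↑n * F ↑n K + ω ↑n := by
        rw [hcast]; exact harrow K ↑n
      have hsum : ∑ i ∈ Finset.range n, ω ↑i * ∏ j ∈ Finset.Ico (i+1) (n+1), γ ↑j
          = ∑ i ∈ Finset.range n, (ω ↑i * ∏ j ∈ Finset.Ico (i+1) n, γ ↑j) * γ ↑n := by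
        refine Finset.sum_congr rfl fun i hi => ?_
        rw [Finset.prod_Ico_succ_top (Finset.mem_range.mp hi)]
        ring
      calc F (↑(n+1)) K ≤ γ ↑n * F ↑n K + ω ↑n := h1
        _ ≤ γ ↑n * ((∏ j ∈ Finset.range n, γ ↑j) * F 0 K
              + ∑ i ∈ Finset.range n, ω ↑i * ∏ j ∈ Finset.Ico (i+1) n, γ ↑j) + ω ↑n := by
            have := mul_le_mul_of_nonneg_left (ih hn') (hγ (↑n : Fin m))
            linarith
        _ = (∏ j ∈ Finset.range (n+1), γ ↑j) * F 0 K
              + ∑ i ∈ Finset.range (n+1), ω ↑i * ∏ j ∈ Finset.Ico (i+1) (n+1), γ ↑j := by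
            rw [Finset.prod_range_succ, Finset.sum_range_succ, hsum, Finset.Ico_self]
            simp only [Finset.prod_empty, mul_one]
            have h2 : ∑ i ∈ Finset.range n,
                γ ↑n * (ω ↑i * ∏ j ∈ Finset.Ico (i+1) n, γ ↑j)
                = ∑ i ∈ Finset.range n, (ω ↑i * ∏ j ∈ Finset.Ico (i+1) n, γ ↑j) * γ ↑n :=
              Finset.sum_congr rfl fun i _ => by ring
            rw [mul_add, Finset.mul_sum, h2]
            ring
  have hprodeq : ∏ j ∈ Finset.range m, γ (↑j) = ∏ i, γ i := by
    rw [← Fin.prod_univ_eq_prod_range]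
    exact Finset.prod_congr rfl fun i _ => by rw [Fin.cast_val_eq_self]
  have hsumeq : ∑ i ∈ Finset.range m, ω ↑i * ∏ j ∈ Finset.Ico (i+1) m, γ ↑j
      = ∑ i : Fin m, ω i * ∏ j ∈ Finset.univ.filter (fun j => i < j), γ j := by
    rw [← Fin.sum_univ_eq_sum_range]
    refine Finset.sum_congr rfl fun i _ => ?_
    rw [Fin.cast_val_eq_self, sg_aux]
  set C := ∑ i : Fin m, ω i * ∏ j ∈ Finset.univ.filter (fun j => i < j), γ j with hC
  set P := ∏ i, γ i with hP
  have hP1 : 0 < 1 - P := by linarith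
  have hbound : ∀ K, F 0 K ≤ C / (1 - P) := by
    intro K
    have h := key K m le_rfl
    rw [Fin.natCast_self, hprodeq, hsumeq] at h
    rw [le_div_iff₀ hP1]
    nlinarith [h]
  intro k
  refine le_trans ?_ (hbound k)
  have := hle 0 k (Fin.last k)
  simpa using this
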